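/- arXiv:2209.06765 — 2 statements merged into one kernel-verified Lean document; each statement's English description precedes it below -/
import Mathlib

section
/- Let A be a finite nonempty subset of the vertex set ℕ×{0,1} of the ladder graph. Then the edge boundary satisfies #∂_E(A) ≥ 2; moreover, if #A ≥ 3 and #A is odd, then #∂_E(A) ≥ 3. -/
open Real

/-- The edge boundary of a set `A`: the edges of `G` with exactly one endpoint in `A`. -/
def edgeBoundary {V : Type*} (G : SimpleGraph V) (A : Set V) : Set (Sym2 V) :=
  {e | e ∈ G.edgeSet ∧ ∃ u w : V, e = s(u, w) ∧ u ∈ A ∧ w ∉ A}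

/-- The vertex boundary of `A`: vertices outside `A` adjacent to some vertex of `A`. -/
def vertexBoundary {V : Type*} (G : SimpleGraph V) (A : Set V) : Set V :=
  {u | u ∉ A ∧ ∃ w ∈ A, G.Adj u w}

/-- The vertex-isoperimetric profile `∂_V(N)`. -/
noncomputable def vertexProfile {V : Type*} (G : SimpleGraph V) (N : ℕ) : ℕ :=
  sInf {k : ℕ | ∃ A : Set V, A.Finite ∧ A.ncard = N ∧ (vertexBoundary G A).ncard = k}

/-- `‖∇f‖_{L¹} = ∑_{{u,w} ∈ E} |f u - f w|`. -/
noncomputable def gradL1 {V : Type*} (G : SimpleGraph V) (f : V → ℝ) : ℝ :=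
  ∑' e : G.edgeSet,
    Sym2.lift ⟨fun u w => |f u - f w|, fun u w => by dsimp only; rw [abs_sub_comm]⟩ e.1

/-- `‖∇f‖_{L^∞} = sup_{{u,w} ∈ E} |f u - f w|`. -/
noncomputable def gradLinf {V : Type*} (G : SimpleGraph V) (f : V → ℝ) : ℝ :=
  ⨆ e : G.edgeSet,
    Sym2.lift ⟨fun u w => |f u - f w|, fun u w => by dsimp only; rw [abs_sub_comm]⟩ e.1

/-- `‖∇f‖_{L^p} = (∑_{{u,w} ∈ E} |f u - f w|^p)^(1/p)` for real `p`. -/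
noncomputable def gradLp {V : Type*} (G : SimpleGraph V) (f : V → ℝ) (p : ℝ) : ℝ :=
  (∑' e : G.edgeSet,
    Sym2.lift ⟨fun u w => |f u - f w| ^ p,
      fun u w => by dsimp only; rw [abs_sub_comm]⟩ e.1) ^ (1 / p)

/-- `‖∇f‖_{L²} = (∑_{{u,w} ∈ E} |f u - f w|²)^(1/2)`. -/
noncomputable def gradL2 {V : Type*} (G : SimpleGraph V) (f : V → ℝ) : ℝ :=
  Real.sqrt (∑' e : G.edgeSet,
    Sym2.lift ⟨fun u w => |f u - f w| ^ 2,
      fun u w => by dsimp only; rw [abs_sub_comm]⟩ e.1)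

/-- `g` is the rearrangement of `f` along the enumeration `v` (with `v 0 = v₁`):
`g` is obtained from `f` by permuting its values, and the values of `g` are
non-increasing along the enumeration. -/
def IsRearrangement {V : Type*} (v : ℕ → V) (f g : V → ℝ) : Prop :=
  (∃ σ : Equiv.Perm V, g = f ∘ σ) ∧ ∀ m n : ℕ, m ≤ n → g (v n) ≤ g (v m)

/-- The grid graph `(ℤ², ℓ¹)`. -/
def gridGraph : SimpleGraph (ℤ × ℤ) where
  Adj p q := |p.1 - q.1| + |p.2 - q.2| = 1
  symm := by
    constructor
    intro p q h
    rw [abs_sub_comm q.1 p.1, abs_sub_comm q.2 p.2]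
    exact h
  loopless := by constructor; intro p h; simp at h

/-- One step of the counterclockwise square spiral on `ℤ²`. -/
def spiralNext : ℤ × ℤ → ℤ × ℤ := fun p =>
  if 1 ≤ p.1 ∧ p.2 = -p.1 then (p.1 + 1, p.2)
  else if 1 ≤ p.1 ∧ -p.1 ≤ p.2 ∧ p.2 < p.1 then (p.1, p.2 + 1)
  else if 1 ≤ p.2 ∧ -p.2 < p.1 ∧ p.1 ≤ p.2 then (p.1 - 1, p.2)
  else if p.1 ≤ -1 ∧ p.1 < p.2 ∧ p.2 ≤ -p.1 then (p.1, p.2 - 1)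
  else (p.1 + 1, p.2)

/-- The spiral enumeration of `ℤ²`, 0-indexed: `spiral 0 = v₁ = (0,0)`,
`spiral 1 = v₂ = (1,0)`, `spiral 2 = v₃ = (1,1)`, `spiral 3 = v₄ = (0,1)`, … -/
def spiral (n : ℕ) : ℤ × ℤ := spiralNext^[n] (0, 0)

/-- The ladder graph on `ℕ × {0,1}`: `(m,i)` adjacent to `(n,j)` iff `|m-n|+|i-j| = 1`. -/
def ladderGraph : SimpleGraph (ℕ × Fin 2) where
  Adj a b := |(a.1 : ℤ) - b.1| + |(a.2.1 : ℤ) - b.2.1| = 1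
  symm := by
    constructor
    intro a b h
    rw [abs_sub_comm (b.1 : ℤ) (a.1 : ℤ), abs_sub_comm (b.2.1 : ℤ) (a.2.1 : ℤ)]
    exact h
  loopless := by constructor; intro a h; simp at h

lemma ladder_adj_vert (m : ℕ) : ladderGraph.Adj (m, 0) (m, 1) := by
  show |(m : ℤ) - m| + _ = 1
  norm_num

lemma ladder_adj_horiz (m : ℕ) (i : Fin 2) : ladderGraph.Adj (m, i) (m + 1, i) := by
  show |(m : ℤ) - (m + 1 : ℕ)| + |(i.1 : ℤ) - i.1| = 1
  push_cast
  rw [show (m : ℤ) - (m + 1) = -1 by ring]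
  norm_num

lemma ladder_adj_bound {u w : ℕ × Fin 2} (h : ladderGraph.Adj u w) : w.1 ≤ u.1 + 1 := by
  have h' : |(u.1 : ℤ) - w.1| + |(u.2.1 : ℤ) - w.2.1| = 1 := h
  have h1 : |(u.1 : ℤ) - w.1| ≤ 1 := by
    have := abs_nonneg ((u.2.1 : ℤ) - w.2.1); linarith
  rw [abs_le] at h1
  omega

lemma edgeBoundary_finite (A : Set (ℕ × Fin 2)) (hA : A.Finite) :
    (edgeBoundary ladderGraph A).Finite := by
  have him : (Prod.fst '' A).Finite := hA.image _
  obtain ⟨N, hN⟩ := him.bddAbove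
  set B : Set (ℕ × Fin 2) := {p | p.1 ≤ N + 1} with hB
  have hBfin : B.Finite := by
    have : B = (Set.Iic (N + 1)) ×ˢ (Set.univ : Set (Fin 2)) := by
      ext p; simp [hB, Set.mem_prod]
    rw [this]
    exact (Set.finite_Iic _).prod (Set.finite_univ)
  have hsub : edgeBoundary ladderGraph A ⊆ (fun p : (ℕ × Fin 2) × (ℕ × Fin 2) => s(p.1, p.2)) '' (B ×ˢ B) := by
    rintro e ⟨he, u, w, rfl, hu, hw⟩
    have hadj : ladderGraph.Adj u w := he
    have hu1 : u.1 ≤ N := hN ⟨u, hu, rfl⟩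
    have hw1 : w.1 ≤ u.1 + 1 := ladder_adj_bound hadj
    exact ⟨(u, w), ⟨show u.1 ≤ N + 1 by omega, show w.1 ≤ N + 1 by omega⟩, rfl⟩
  exact ((hBfin.prod hBfin).image _).subset hsub

lemma two_le_ncard_of {α : Type*} {S : Set α} (hS : S.Finite) {a b : α}
    (ha : a ∈ S) (hb : b ∈ S) (hab : a ≠ b) : 2 ≤ S.ncard :=
  Set.one_lt_ncard_iff hS |>.mpr ⟨a, b, ha, hb, hab⟩

lemma three_le_ncard_of {α : Type*} {S : Set α} (hS : S.Finite) {a b c : α}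
    (ha : a ∈ S) (hb : b ∈ S) (hc : c ∈ S)
    (hab : a ≠ b) (hac : a ≠ c) (hbc : b ≠ c) : 3 ≤ S.ncard := by
  have hsub : ({a, b, c} : Set α) ⊆ S := by
    intro x hx; rcases hx with rfl | rfl | rfl <;> assumption
  have h3 : ({a, b, c} : Set α).ncard = 3 :=
    Set.ncard_eq_three.mpr ⟨a, b, c, hab, hac, hbc, rfl⟩
  calc 3 = ({a, b, c} : Set α).ncard := h3.symm
    _ ≤ S.ncard := Set.ncard_le_ncard hsub hS

lemma exists_three_of {α : Type*} {S : Set α} (hS : S.Finite) (h : 3 ≤ S.ncard) :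
    ∃ a b c, a ∈ S ∧ b ∈ S ∧ c ∈ S ∧ a ≠ b ∧ a ≠ c ∧ b ≠ c := by
  obtain ⟨a, b, ha, hb, hab⟩ := (Set.one_lt_ncard_iff hS).mp (by omega)
  have hpair : ({a, b} : Set α) ⊆ S := by
    intro x hx; rcases hx with rfl | rfl <;> assumption
  have hdiff : 1 ≤ (S \ {a, b}).ncard := by
    rw [Set.ncard_diff hpair (hS.subset hpair)]
    have : ({a, b} : Set α).ncard = 2 := Set.ncard_pair hab
    omega
  obtain ⟨c, hc⟩ := Set.nonempty_of_ncard_ne_zero (s := S \ {a, b}) (by omega)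
  exact ⟨a, b, c, ha, hb, hc.1, hab,
    fun h => hc.2 (by simp [← h]), fun h => hc.2 (by simp [← h])⟩

lemma nat_set_max {S : Set ℕ} (hfin : S.Finite) (hne : S.Nonempty) :
    ∃ M ∈ S, M + 1 ∉ S := by
  obtain ⟨M, hM, hmax⟩ := Set.Finite.exists_maximalFor id S hfin hne
  refine ⟨M, hM, fun h => ?_⟩
  have h2 := hmax (j := M + 1) h (by simp only [id_eq]; omega)
  simp only [id_eq] at h2
  omega

lemma vert_mem (A : Set (ℕ × Fin 2)) {m : ℕ} (h0 : ((m, 0) : ℕ × Fin 2) ∈ A)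
    (h1 : ((m, 1) : ℕ × Fin 2) ∉ A) :
    s(((m, 0) : ℕ × Fin 2), (m, 1)) ∈ edgeBoundary ladderGraph A :=
  ⟨ladder_adj_vert m, (m, 0), (m, 1), rfl, h0, h1⟩

lemma vert_mem' (A : Set (ℕ × Fin 2)) {m : ℕ} (h1 : ((m, 1) : ℕ × Fin 2) ∈ A)
    (h0 : ((m, 0) : ℕ × Fin 2) ∉ A) :
    s(((m, 0) : ℕ × Fin 2), (m, 1)) ∈ edgeBoundary ladderGraph A :=
  ⟨ladder_adj_vert m, (m, 1), (m, 0), Sym2.eq_swap.symm, h1, h0⟩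

lemma horiz_mem (A : Set (ℕ × Fin 2)) {m : ℕ} {i : Fin 2}
    (h0 : ((m, i) : ℕ × Fin 2) ∈ A) (h1 : ((m + 1, i) : ℕ × Fin 2) ∉ A) :
    s(((m, i) : ℕ × Fin 2), (m + 1, i)) ∈ edgeBoundary ladderGraph A :=
  ⟨ladder_adj_horiz m i, (m, i), (m + 1, i), rfl, h0, h1⟩

lemma ladder_parity (A : Set (ℕ × Fin 2)) (hA : A.Finite)
    (hsame : ∀ m : ℕ, ((m, 0) : ℕ × Fin 2) ∈ A ↔ ((m, 1) : ℕ × Fin 2) ∈ A) :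
    ¬ Odd A.ncard := by
  set A0 : Set ℕ := {m | ((m, 0) : ℕ × Fin 2) ∈ A} with hA0
  have hA0fin : A0.Finite := by
    apply (hA.image Prod.fst).subset
    intro m hm; exact ⟨(m, 0), hm, rfl⟩
  have hsplit : A = ((fun m => ((m, 0) : ℕ × Fin 2)) '' A0) ∪
      ((fun m => ((m, 1) : ℕ × Fin 2)) '' A0) := by
    ext ⟨m, i⟩
    fin_cases i
    · simp [hA0]
    · simp [hA0, hsame m]
  have hinj0 : Function.Injective (fun m => ((m, 0) : ℕ × Fin 2)) := by
    intro a b h; simpa using h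
  have hinj1 : Function.Injective (fun m => ((m, 1) : ℕ × Fin 2)) := by
    intro a b h; simpa using h
  have hdisj : Disjoint ((fun m => ((m, 0) : ℕ × Fin 2)) '' A0)
      ((fun m => ((m, 1) : ℕ × Fin 2)) '' A0) := by
    rw [Set.disjoint_left]
    rintro p ⟨a, _, rfl⟩ ⟨b, _, hb⟩
    simp at hb
  have hcard : A.ncard = A0.ncard + A0.ncard := by
    rw [hsplit, Set.ncard_union_eq hdisj (hA0fin.image _) (hA0fin.image _),
      Set.ncard_image_of_injective _ hinj0, Set.ncard_image_of_injective _ hinj1]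
  rw [hcard]
  rintro ⟨k, hk⟩
  omega

/-- Every finite nonempty subset `A` of the ladder graph satisfies
`#∂_E(A) ≥ 2`; moreover, if `#A ≥ 3` is odd then `#∂_E(A) ≥ 3`. -/
theorem ladder_edge_boundary (A : Set (ℕ × Fin 2)) (hA : A.Finite) (hne : A.Nonempty) :
    2 ≤ (edgeBoundary ladderGraph A).ncard ∧
      (3 ≤ A.ncard → Odd A.ncard → 3 ≤ (edgeBoundary ladderGraph A).ncard) := by
  have hbfin := edgeBoundary_finite A hA
  set A0 : Set ℕ := {m | ((m, 0) : ℕ × Fin 2) ∈ A} with hA0def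
  set A1 : Set ℕ := {m | ((m, 1) : ℕ × Fin 2) ∈ A} with hA1def
  have hA0fin : A0.Finite := by
    apply (hA.image Prod.fst).subset
    intro m hm; exact ⟨(m, 0), hm, rfl⟩
  have hA1fin : A1.Finite := by
    apply (hA.image Prod.fst).subset
    intro m hm; exact ⟨(m, 1), hm, rfl⟩
  have hor : A0.Nonempty ∨ A1.Nonempty := by
    obtain ⟨⟨m, i⟩, hmem⟩ := hne
    fin_cases i
    · exact Or.inl ⟨m, hmem⟩
    · exact Or.inr ⟨m, hmem⟩
  constructor
  · -- Part 1 : boundary has at least 2 edges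
    by_cases h0 : A0.Nonempty <;> by_cases h1 : A1.Nonempty
    · -- both rows nonempty: horizontal boundary edge in each row
      obtain ⟨M0, hM0, hM0'⟩ := nat_set_max hA0fin h0
      obtain ⟨M1, hM1, hM1'⟩ := nat_set_max hA1fin h1
      refine two_le_ncard_of hbfin (horiz_mem A hM0 hM0') (horiz_mem A hM1 hM1') ?_
      intro h
      simp only [Sym2.eq_iff, Prod.mk.injEq, Fin.ext_iff, Fin.val_zero, Fin.val_one] at h
      all_goals omega
    · -- row 1 empty
      obtain ⟨M0, hM0, hM0'⟩ := nat_set_max hA0fin h0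
      have ha1 : ((M0, 1) : ℕ × Fin 2) ∉ A := fun hh => h1 ⟨M0, hh⟩
      refine two_le_ncard_of hbfin (vert_mem A hM0 ha1) (horiz_mem A hM0 hM0') ?_
      intro h
      simp only [Sym2.eq_iff, Prod.mk.injEq, Fin.ext_iff, Fin.val_zero, Fin.val_one] at h
      all_goals omega
    · -- row 0 empty
      obtain ⟨M1, hM1, hM1'⟩ := nat_set_max hA1fin h1
      have ha0 : ((M1, 0) : ℕ × Fin 2) ∉ A := fun hh => h0 ⟨M1, hh⟩
      refine two_le_ncard_of hbfin (vert_mem' A hM1 ha0) (horiz_mem A hM1 hM1') ?_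
      intro h
      simp only [Sym2.eq_iff, Prod.mk.injEq, Fin.ext_iff, Fin.val_zero, Fin.val_one] at h
      all_goals omega
    · exact absurd hor (by tauto)
  · -- Part 2 : |A| ≥ 3 odd
    intro hcard hodd
    by_cases h0 : A0.Nonempty <;> by_cases h1 : A1.Nonempty
    · -- both rows nonempty : two horizontal edges + one vertical edge
      obtain ⟨M0, hM0, hM0'⟩ := nat_set_max hA0fin h0
      obtain ⟨M1, hM1, hM1'⟩ := nat_set_max hA1fin h1
      have hv : ∃ m : ℕ, ¬ (((m, 0) : ℕ × Fin 2) ∈ A ↔ ((m, 1) : ℕ × Fin 2) ∈ A) := by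
        by_contra hc
        push_neg at hc
        exact ladder_parity A hA hc hodd
      obtain ⟨m, hm⟩ := hv
      have hvmem : s(((m, 0) : ℕ × Fin 2), (m, 1)) ∈ edgeBoundary ladderGraph A := by
        by_cases hm0 : ((m, 0) : ℕ × Fin 2) ∈ A
        · exact vert_mem A hm0 (fun hh => hm ⟨fun _ => hh, fun _ => hm0⟩)
        · have hm1 : ((m, 1) : ℕ × Fin 2) ∈ A := by tauto
          exact vert_mem' A hm1 hm0
      refine three_le_ncard_of hbfin (horiz_mem A hM0 hM0') (horiz_mem A hM1 hM1')
        hvmem ?_ ?_ ?_ <;>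
      · intro h
        simp only [Sym2.eq_iff, Prod.mk.injEq, Fin.ext_iff, Fin.val_zero, Fin.val_one] at h
        all_goals omega
    · -- row 1 empty : three vertical edges
      obtain ⟨a, b, c, ha, hb, hc, hab, hac, hbc⟩ := exists_three_of hA hcard
      have hrow : ∀ p : ℕ × Fin 2, p ∈ A → p.2 = 0 := by
        rintro ⟨m, i⟩ hp
        fin_cases i
        · rfl
        · exact absurd (⟨m, hp⟩ : A1.Nonempty) h1
      obtain ⟨a1, a2⟩ := a; obtain ⟨b1, b2⟩ := b; obtain ⟨c1, c2⟩ := c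
      have ha2 := hrow _ ha; have hb2 := hrow _ hb; have hc2 := hrow _ hc
      subst ha2; subst hb2; subst hc2
      have hno : ∀ m : ℕ, ((m, 1) : ℕ × Fin 2) ∉ A := fun m hh => h1 ⟨m, hh⟩
      have hab' : a1 ≠ b1 := fun hh => hab (by simp [hh])
      have hac' : a1 ≠ c1 := fun hh => hac (by simp [hh])
      have hbc' : b1 ≠ c1 := fun hh => hbc (by simp [hh])
      refine three_le_ncard_of hbfin (vert_mem A ha (hno a1)) (vert_mem A hb (hno b1))
        (vert_mem A hc (hno c1)) ?_ ?_ ?_ <;>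
      · intro h
        simp only [Sym2.eq_iff, Prod.mk.injEq, Fin.ext_iff, Fin.val_zero, Fin.val_one] at h
        all_goals omega
    · -- row 0 empty : three vertical edges
      obtain ⟨a, b, c, ha, hb, hc, hab, hac, hbc⟩ := exists_three_of hA hcard
      have hrow : ∀ p : ℕ × Fin 2, p ∈ A → p.2 = 1 := by
        rintro ⟨m, i⟩ hp
        fin_cases i
        · exact absurd (⟨m, hp⟩ : A0.Nonempty) h0
        · rfl
      obtain ⟨a1, a2⟩ := a; obtain ⟨b1, b2⟩ := b; obtain ⟨c1, c2⟩ := c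
      have ha2 := hrow _ ha; have hb2 := hrow _ hb; have hc2 := hrow _ hc
      subst ha2; subst hb2; subst hc2
      have hno : ∀ m : ℕ, ((m, 0) : ℕ × Fin 2) ∉ A := fun m hh => h0 ⟨m, hh⟩
      have hab' : a1 ≠ b1 := fun hh => hab (by simp [hh])
      have hac' : a1 ≠ c1 := fun hh => hac (by simp [hh])
      have hbc' : b1 ≠ c1 := fun hh => hbc (by simp [hh])
      refine three_le_ncard_of hbfin (vert_mem' A ha (hno a1)) (vert_mem' A hb (hno b1))
        (vert_mem' A hc (hno c1)) ?_ ?_ ?_ <;>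
      · intro h
        simp only [Sym2.eq_iff, Prod.mk.injEq, Fin.ext_iff, Fin.val_zero, Fin.val_one] at h
        all_goals omega
    · exact absurd hor (by tauto)
end

section
/- Let f : ℤ → ℝ_{≥0} be finitely supported and let f* denote its rearrangement with respect to the alternating enumeration of ℤ given by v₁=0, v₂=−1, v₃=1, v₄=−2, v₅=2, … (i.e. v_{2k} = −k and v_{2k+1} = k for k ≥ 1). Then for every real p with 1 ≤ p < ∞, and also for p = ∞, one has ‖∇f*‖_{L^p} ≤ ‖∇f‖_{L^p}, where the norms are taken with respect to the path graph on ℤ (x adjacent to y iff |x−y| = 1). -/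
open Real

/-- The path graph on `ℤ`: `x` adjacent to `y` iff `|x - y| = 1`. -/
def pathGraph : SimpleGraph ℤ where
  Adj x y := |x - y| = 1
  symm := by constructor; intro x y h; rw [abs_sub_comm]; exact h
  loopless := by constructor; intro x h; simp at h

/-- The alternating enumeration of `ℤ`, 0-indexed:
`v₁ = 0, v₂ = -1, v₃ = 1, v₄ = -2, v₅ = 2, …` -/
def altEnum (n : ℕ) : ℤ :=
  if n % 2 = 1 then -(((n : ℤ) + 1) / 2) else (n : ℤ) / 2

namespace PS

lemma path_adj (y : ℤ) : pathGraph.Adj y (y+1) := by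
  show |y - (y+1)| = 1
  simp

lemma edge_mem (y : ℤ) : s(y, y+1) ∈ pathGraph.edgeSet := path_adj y

lemma edge_form {e : Sym2 ℤ} (he : e ∈ pathGraph.edgeSet) : ∃ y : ℤ, e = s(y, y+1) := by
  induction e with
  | _ u w =>
    have h : |u - w| = 1 := he
    rcases (abs_eq (by norm_num : (0:ℤ) ≤ 1)).mp h with h1 | h1
    · exact ⟨w, by simp [Sym2.mk_eq_mk_iff, Prod.ext_iff]; omega⟩
    · exact ⟨u, by simp [Sym2.mk_eq_mk_iff, Prod.ext_iff]; omega⟩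

lemma edge_inj {a b : ℤ} (h : s(a, a+1) = s(b, b+1)) : a = b := by
  rw [Sym2.eq_iff] at h
  omega

/-- the increment of `x ^ p` is monotone (convexity). -/
lemma incr {p : ℝ} (hp : 1 ≤ p) {x y δ : ℝ} (hx : 0 ≤ x) (hxy : x ≤ y) (hδ : 0 ≤ δ) :
    (x + δ) ^ p - x ^ p ≤ (y + δ) ^ p - y ^ p := by
  rcases eq_or_lt_of_le hxy with rfl | hxy
  · exact le_refl _
  rcases eq_or_lt_of_le hδ with rfl | hδ
  · simp
  have hD : (0:ℝ) < y + δ - x := by linarith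
  have hDne : y + δ - x ≠ 0 := ne_of_gt hD
  have hs0 : 0 ≤ δ / (y + δ - x) := by positivity
  have ht0 : 0 ≤ (y - x) / (y + δ - x) := by apply div_nonneg <;> linarith
  have hst : (y - x) / (y + δ - x) + δ / (y + δ - x) = 1 := by field_simp; ring
  have hcx : ((y - x) / (y + δ - x)) * x + (δ / (y + δ - x)) * (y + δ) = x + δ := by
    field_simp; ring
  have hcy : (δ / (y + δ - x)) * x + ((y - x) / (y + δ - x)) * (y + δ) = y := by
    field_simp; ring
  have hconv := convexOn_rpow hp
  have h1 := hconv.2 (Set.mem_Ici.mpr hx) (Set.mem_Ici.mpr (by linarith : (0:ℝ) ≤ y + δ)) ht0 hs0 hst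
  have h2 := hconv.2 (Set.mem_Ici.mpr hx) (Set.mem_Ici.mpr (by linarith : (0:ℝ) ≤ y + δ)) hs0 ht0
    (by linarith)
  simp only [smul_eq_mul] at h1 h2
  rw [hcx] at h1
  rw [hcy] at h2
  have h3 : ((y - x) / (y + δ - x)) * x ^ p + (δ / (y + δ - x)) * (y + δ) ^ p +
      ((δ / (y + δ - x)) * x ^ p + ((y - x) / (y + δ - x)) * (y + δ) ^ p)
      = x ^ p + (y + δ) ^ p := by
    linear_combination (x ^ p + (y + δ) ^ p) * hst
  linarith



/-- monotone increments: sum over a finset of increments is at most the total increment. -/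
lemma sum_tele {F : ℕ → ℝ} {J : Finset ℕ} (hJ : J.Nonempty)
    (hmono : ∀ i j : ℕ, J.min' hJ ≤ i → i ≤ j → j ≤ J.max' hJ + 1 → F i ≤ F j) :
    ∑ k ∈ J, (F (k+1) - F k) ≤ F (J.max' hJ + 1) - F (J.min' hJ) := by
  set a := J.min' hJ with ha
  set b := J.max' hJ with hb
  have hab : a ≤ b := J.min'_le _ (J.max'_mem hJ)
  have hsub : J ⊆ Finset.Icc a b := fun k hk =>
    Finset.mem_Icc.mpr ⟨J.min'_le _ hk, J.le_max' _ hk⟩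
  have h1 : ∑ k ∈ J, (F (k+1) - F k) ≤ ∑ k ∈ Finset.Icc a b, (F (k+1) - F k) := by
    apply Finset.sum_le_sum_of_subset_of_nonneg hsub
    intro i hi _
    have hi' := Finset.mem_Icc.mp hi
    have := hmono i (i+1) hi'.1 (Nat.le_succ i) (by omega)
    linarith
  refine h1.trans_eq ?_
  have : Finset.Icc a b = Finset.Ico a (b+1) := by
    ext x; simp [Finset.mem_Icc, Finset.mem_Ico]
  rw [this, Finset.sum_Ico_eq_sum_range]
  have h2 : ∀ k ∈ Finset.range (b + 1 - a), F (a + k + 1) - F (a + k) =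
      (fun i => F (a + i)) (k+1) - (fun i => F (a+i)) k := by
    intro k _; simp; ring_nf
  rw [Finset.sum_congr rfl h2, Finset.sum_range_sub (fun i => F (a + i))]
  have : a + (b + 1 - a) = b + 1 := by omega
  rw [this]
  simp

/-- split a range sum into even and odd parts -/
lemma sum_range_even_odd (g : ℕ → ℝ) (N : ℕ) :
    ∑ m ∈ Finset.range (2*N), g m =
      ∑ j ∈ Finset.range N, g (2*j) + ∑ j ∈ Finset.range N, g (2*j+1) := by
  induction N with
  | zero => simp
  | succ N ih =>
      have : 2*(N+1) = (2*N+1)+1 := by ring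
      rw [this, Finset.sum_range_succ, Finset.sum_range_succ,
        Finset.sum_range_succ (fun j => g (2*j)), Finset.sum_range_succ (fun j => g (2*j+1)), ih]
      ring

def zidx (z : ℤ) : ℕ := if 0 ≤ z then (2*z).toNat else (-2*z - 1).toNat

lemma altEnum_zidx (z : ℤ) : altEnum (zidx z) = z := by
  rcases le_or_gt 0 z with h | h
  · have hz : zidx z = (2*z).toNat := if_pos h
    rw [hz]; unfold altEnum; split <;> omega
  · have hz : zidx z = (-2*z-1).toNat := if_neg (by omega)
    rw [hz]; unfold altEnum; split <;> omega

lemma zidx_nonneg {y : ℤ} (h : 0 ≤ y) : zidx y = (2*y).toNat ∧ zidx (y+1) = zidx y + 2 := by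
  unfold zidx; constructor
  · rw [if_pos h]
  · rw [if_pos (by omega), if_pos h]; omega

lemma zidx_neg2 {y : ℤ} (h : y ≤ -2) : zidx y = (-2*y-1).toNat ∧ zidx (y+1) = zidx y - 2
    ∧ 3 ≤ zidx y ∧ zidx y % 2 = 1 := by
  unfold zidx
  rw [if_neg (by omega), if_neg (by omega)]
  omega

lemma zidx_neg_one : zidx (-1) = 1 ∧ zidx 0 = 0 := by
  unfold zidx
  rw [if_neg (by omega), if_pos (by omega)]
  omega

lemma zidx_inj {y z : ℤ} (h : zidx y = zidx z) : y = z := by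
  unfold zidx at h
  split at h <;> split at h <;> omega


lemma zidx_altEnum (m : ℕ) : zidx (altEnum m) = m := by
  unfold zidx altEnum
  split <;> split <;> omega

noncomputable def eterm (g : ℤ → ℝ) (p : ℝ) (e : ↥pathGraph.edgeSet) : ℝ :=
  Sym2.lift ⟨fun u w => |g u - g w| ^ p,
    fun u w => by dsimp only; rw [abs_sub_comm]⟩ e.1

lemma gradLp_eq (g : ℤ → ℝ) (p : ℝ) :
    gradLp pathGraph g p = (∑' e : pathGraph.edgeSet, eterm g p e) ^ (1/p) := rfl

lemma eterm_mk (g : ℤ → ℝ) (p : ℝ) (y : ℤ) (h : s(y,y+1) ∈ pathGraph.edgeSet) :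
    eterm g p ⟨s(y,y+1), h⟩ = |g y - g (y+1)| ^ p := by
  simp [eterm]

noncomputable def phi (A : ℕ → ℝ) (p : ℝ) (u : ℝ) (k : ℕ) : ℝ :=
  (u - A (k+1)) ^ p - (u - A k) ^ p

noncomputable def tgt (A : ℕ → ℝ) (p : ℝ) (k : ℕ) : ℝ :=
  phi A p (A (k-1)) k + phi A p (A k) k

lemma phi_nonneg {A : ℕ → ℝ} {p u : ℝ} {k : ℕ} (hp : 1 ≤ p)
    (hm : A (k+1) ≤ A k) (hu : A k ≤ u) (h0 : 0 ≤ A (k+1)) : 0 ≤ phi A p u k :=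
  sub_nonneg.mpr (Real.rpow_le_rpow (by linarith) (by linarith) (by linarith))

lemma phi_mono {A : ℕ → ℝ} {p u u' : ℝ} {k : ℕ} (hp : 1 ≤ p) (h0 : 0 ≤ A (k+1))
    (hm : A (k+1) ≤ A k) (hu : A k ≤ u) (huu : u ≤ u') : phi A p u k ≤ phi A p u' k := by
  have h := incr hp (x := u - A k) (y := u' - A k) (δ := A k - A (k+1))
    (sub_nonneg.mpr hu) (by linarith) (by linarith)
  have e1 : u - A k + (A k - A (k+1)) = u - A (k+1) := by ring
  have e2 : u' - A k + (A k - A (k+1)) = u' - A (k+1) := by ring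
  rw [e1, e2] at h
  simpa [phi] using h

noncomputable def wfun (A : ℕ → ℝ) (p : ℝ) (m : ℕ) : ℝ :=
  if m % 2 = 0 then (A m - A (m+2))^p
  else if m = 1 then (A 0 - A 1)^p else (A (m-2) - A m)^p

lemma fstar_sum {g : ℤ → ℝ} {A : ℕ → ℝ} {n : ℕ} {p : ℝ} (hp : 1 ≤ p)
    (hmono : ∀ i j : ℕ, i ≤ j → A j ≤ A i) (hzero : ∀ i, n ≤ i → A i = 0)
    (hval : ∀ z : ℤ, g z = A (zidx z)) :
    ∑' e : pathGraph.edgeSet, eterm g p e = ∑ k ∈ Finset.range n, tgt A p k := by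
  have hppos : (0:ℝ) < p := by linarith
  have hpne : p ≠ 0 := ne_of_gt hppos
  have hA0 : ∀ i, 0 ≤ A i := fun i => by
    have := hmono i (i + n) (by omega)
    have h2 := hzero (i+n) (by omega)
    -- A (i+n) = 0 ≤ A i
    rw [h2] at this; linarith
  set Y : Finset ℤ := Finset.Icc (-(n:ℤ)-2) (n+1) with hY
  set S : Finset ↥pathGraph.edgeSet := Y.image (fun y => ⟨s(y,y+1), edge_mem y⟩) with hS
  have hout : ∀ e ∉ S, eterm g p e = 0 := by
    rintro ⟨e, he⟩ hnot
    obtain ⟨y, rfl⟩ := edge_form he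
    have hy : y ∉ Y := fun hy => hnot (Finset.mem_image.mpr ⟨y, hy, rfl⟩)
    have hy' : ¬(-(n:ℤ)-2 ≤ y ∧ y ≤ n+1) := by
      intro h; exact hy (by rw [hY]; exact Finset.mem_Icc.mpr h)
    have hlarge : n ≤ zidx y ∧ n ≤ zidx (y+1) := by
      unfold zidx; constructor <;> [skip; skip] <;> split <;> omega
    rw [eterm_mk, hval y, hval (y+1), hzero _ hlarge.1, hzero _ hlarge.2]
    simp [Real.zero_rpow hpne]
  rw [tsum_eq_sum hout, hS,
    Finset.sum_image (by
      intro a _ b _ h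
      exact edge_inj (congrArg Subtype.val h))]
  have hterm : ∀ y ∈ Y, eterm g p ⟨s(y,y+1), edge_mem y⟩ = wfun A p (zidx y) := by
    intro y _
    rw [eterm_mk, hval y, hval (y+1)]
    rcases le_or_gt 0 y with h | h
    · obtain ⟨h1, h2⟩ := zidx_nonneg h
      have hmod : zidx y % 2 = 0 := by rw [h1]; omega
      rw [h2]
      unfold wfun
      rw [if_pos hmod, abs_of_nonneg (sub_nonneg.mpr (hmono _ _ (by omega)))]
    · rcases eq_or_lt_of_le (by omega : y ≤ -1) with rfl | h2
      · rw [(by norm_num : (-1:ℤ)+1 = 0), zidx_neg_one.1, zidx_neg_one.2]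
        unfold wfun
        rw [if_neg (by omega), if_pos rfl,
          abs_of_nonpos (sub_nonpos.mpr (hmono 0 1 (by omega))), neg_sub]
      · obtain ⟨h1, h2', h3, h4⟩ := zidx_neg2 (by omega : y ≤ -2)
        rw [h2']
        unfold wfun
        rw [if_neg (by omega), if_neg (by omega),
          abs_of_nonpos (sub_nonpos.mpr (hmono _ _ (by omega))), neg_sub]
  rw [Finset.sum_congr rfl hterm]
  -- reindex to natural numbers
  have hre : ∑ y ∈ Y, wfun A p (zidx y) = ∑ m ∈ Finset.range (2*(n+2)), wfun A p m := by
    apply Finset.sum_nbij' (fun y => zidx y) (fun m => altEnum m)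
    · intro a ha
      rw [hY, Finset.mem_Icc] at ha
      rw [Finset.mem_range]
      unfold zidx; split <;> omega
    · intro m hm
      rw [Finset.mem_range] at hm
      rw [hY, Finset.mem_Icc]
      unfold altEnum; split <;> omega
    · intro a _; exact altEnum_zidx a
    · intro m _; exact zidx_altEnum m
    · intro a _; rfl
  rw [hre, sum_range_even_odd]
  -- evens
  have heven : ∀ j, wfun A p (2*j) = (A (2*j) - A (2*j+2))^p := by
    intro j; unfold wfun; rw [if_pos (by omega)]
  have hodd : ∀ j, wfun A p (2*j+3) = (A (2*j+1) - A (2*j+3))^p := by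
    intro j; unfold wfun
    rw [if_neg (by omega), if_neg (by omega)]
    congr 2 <;> omega
  have hodd0 : wfun A p 1 = (A 0 - A 1)^p := by
    unfold wfun; rw [if_neg (by omega), if_pos rfl]
  -- ∑ evens over range (n+2) = ∑ over range (n+1) plus vanishing term
  have hev2 : ∑ j ∈ Finset.range (n+2), wfun A p (2*j)
      = ∑ j ∈ Finset.range (n+1), wfun A p (2*j) := by
    rw [Finset.sum_range_succ]
    have : wfun A p (2*(n+1)) = 0 := by
      rw [heven, hzero (2*(n+1)) (by omega), hzero (2*(n+1)+2) (by omega)]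
      simp [Real.zero_rpow hpne]
    rw [this, add_zero]
  have hod2 : ∑ j ∈ Finset.range (n+2), wfun A p (2*j+1)
      = ∑ j ∈ Finset.range (n+1), wfun A p (2*j+3) + (A 0 - A 1)^p := by
    rw [Finset.sum_range_succ' (fun j => wfun A p (2*j+1)) (n+1)]
    exact congrArg₂ (· + ·) (Finset.sum_congr rfl fun j _ => rfl) hodd0
  rw [hev2, hod2]
  have hcomb : ∑ j ∈ Finset.range (n+1), wfun A p (2*j)
      + ∑ j ∈ Finset.range (n+1), wfun A p (2*j+3)
      = ∑ m ∈ Finset.range (2*(n+1)), (A m - A (m+2))^p := by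
    rw [sum_range_even_odd (fun m => (A m - A (m+2))^p) (n+1)]
    congr 1
    · apply Finset.sum_congr rfl; intro j _; rw [heven]
    · apply Finset.sum_congr rfl; intro j _; rw [hodd]
  rw [← add_assoc, hcomb]
  -- restrict the range
  have hres : ∑ m ∈ Finset.range (2*(n+1)), (A m - A (m+2))^p
      = ∑ m ∈ Finset.range n, (A m - A (m+2))^p := by
    symm
    apply Finset.sum_subset
    · intro m hm; rw [Finset.mem_range] at *; omega
    · intro m _ hm
      rw [Finset.mem_range, not_lt] at hm
      rw [hzero m hm, hzero (m+2) (by omega)]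
      simp [Real.zero_rpow hpne]
  rw [hres]
  -- final algebra: split each term via phi
  have hsplit : ∀ m, (A m - A (m+2))^p = phi A p (A m) m + phi A p (A m) (m+1) := by
    intro m
    unfold phi
    rw [sub_self, Real.zero_rpow hpne]
    ring
  rw [Finset.sum_congr rfl (fun m _ => hsplit m), Finset.sum_add_distrib]
  unfold tgt
  rw [Finset.sum_add_distrib]
  -- ∑ phi (A m) (m+1) + (A0-A1)^p = ∑ phi (A (k-1)) k
  have key : ∑ m ∈ Finset.range n, phi A p (A m) (m+1) + (A 0 - A 1)^p
      = ∑ k ∈ Finset.range n, phi A p (A (k-1)) k := by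
    rcases Nat.eq_zero_or_pos n with rfl | hn
    · simp
      rw [hzero 0 (by omega), hzero 1 (by omega), sub_self, Real.zero_rpow hpne]
    · obtain ⟨n', rfl⟩ : ∃ n', n = n' + 1 := ⟨n-1, by omega⟩
      rw [Finset.sum_range_succ (fun m => phi A p (A m) (m+1)) n']
      have hlast : phi A p (A n') (n'+1) = 0 := by
        unfold phi
        rw [hzero (n'+1) (by omega), hzero (n'+1+1) (by omega)]
        exact sub_self _
      rw [hlast, add_zero]
      rw [Finset.sum_range_succ' (fun k => phi A p (A (k-1)) k) n']
      have h0' : phi A p (A (0-1)) 0 = (A 0 - A 1)^p := by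
        show (A 0 - A 1) ^ p - (A 0 - A 0) ^ p = (A 0 - A 1) ^ p
        rw [sub_self, Real.zero_rpow hpne, sub_zero]
      rw [h0']
      exact congrArg₂ (· + ·) (Finset.sum_congr rfl fun k _ => rfl) rfl
  rw [add_assoc, key]
  ring

lemma eterm_nonneg (g : ℤ → ℝ) (p : ℝ) (e : ↥pathGraph.edgeSet) : 0 ≤ eterm g p e := by
  obtain ⟨e, he⟩ := e
  induction e with
  | _ u w => exact Real.rpow_nonneg (abs_nonneg _) p

lemma f_lower {f : ℤ → ℝ} {A : ℕ → ℝ} {n : ℕ} {x : ℕ → ℤ} {p : ℝ} (hp : 1 ≤ p)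
    (hn : 0 < n)
    (hmono : ∀ i j : ℕ, i ≤ j → A j ≤ A i)
    (hzero : ∀ i, n ≤ i → A i = 0)
    (hA0 : ∀ i, 0 ≤ A i)
    (hinj : ∀ i j, i < n → j < n → x i = x j → i = j)
    (hfx : ∀ i, i < n → f (x i) = A i)
    (hout : ∀ z : ℤ, (∀ i, i < n → x i ≠ z) → f z = 0) :
    ∑ k ∈ Finset.range n, tgt A p k ≤ ∑' e : pathGraph.edgeSet, eterm f p e := by
  have hppos : (0:ℝ) < p := by linarith
  have hpne : p ≠ 0 := ne_of_gt hppos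
  set T : ℕ → Finset ℤ := fun k => (Finset.range (min k n)).image x with hT
  have hTne : ∀ k : ℕ, (T (k+1)).Nonempty := by
    intro k
    exact ⟨x 0, Finset.mem_image.mpr ⟨0, Finset.mem_range.mpr (by omega), rfl⟩⟩
  have hTsub : ∀ j k : ℕ, j ≤ k → T j ⊆ T k := by
    intro j k hjk
    exact Finset.image_subset_image (by
      intro i hi; rw [Finset.mem_range] at *; omega)
  -- membership facts
  have hmemT : ∀ k z, z ∈ T k → ∃ i, i < k ∧ i < n ∧ x i = z := by
    intro k z hz
    obtain ⟨i, hi, rfl⟩ := Finset.mem_image.mp hz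
    rw [Finset.mem_range] at hi
    exact ⟨i, by omega, by omega, rfl⟩
  have hvalT : ∀ k z, z ∈ T (k+1) → A k ≤ f z := by
    intro k z hz
    obtain ⟨i, hik, hin, rfl⟩ := hmemT (k+1) z hz
    rw [hfx i hin]
    exact hmono i k (by omega)
  have houtT : ∀ (j : ℕ) (z : ℤ), z ∉ T j → f z ≤ A j := by
    intro j z hz
    by_cases hzs : ∀ i, i < n → x i ≠ z
    · rw [hout z hzs]; exact hA0 j
    · push_neg at hzs
      obtain ⟨i, hin, rfl⟩ := hzs
      have : ¬ i < min j n := by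
        intro hlt
        exact hz (Finset.mem_image.mpr ⟨i, Finset.mem_range.mpr hlt, rfl⟩)
      rw [hfx i hin]
      exact hmono j i (by omega)
  set mk : ℕ → ℤ := fun k => (T (k+1)).min' (hTne k) with hmk
  set Mk : ℕ → ℤ := fun k => (T (k+1)).max' (hTne k) with hMk
  -- per-level inequality
  have hlevel : ∀ k, k < n →
      tgt A p k ≤ phi A p (f (mk k)) k + phi A p (f (Mk k)) k := by
    intro k hk
    have hm1 : mk k ∈ T (k+1) := Finset.min'_mem _ _
    have hm2 : Mk k ∈ T (k+1) := Finset.max'_mem _ _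
    obtain ⟨i1, hi1k, hi1n, hx1⟩ := hmemT (k+1) _ hm1
    obtain ⟨i2, hi2k, hi2n, hx2⟩ := hmemT (k+1) _ hm2
    have hf1 : f (mk k) = A i1 := by rw [← hx1, hfx i1 hi1n]
    have hf2 : f (Mk k) = A i2 := by rw [← hx2, hfx i2 hi2n]
    rcases Nat.eq_zero_or_pos k with rfl | hkpos
    · have e1 : i1 = 0 := by omega
      have e2 : i2 = 0 := by omega
      rw [hf1, hf2, e1, e2]
      unfold tgt
      exact le_of_eq rfl
    · -- k ≥ 1 : the two boundary vertices are distinct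
      have hcard : 1 < (T (k+1)).card := by
        rw [hT]
        rw [Finset.card_image_of_injOn (by
          intro a ha b hb hab
          rw [Finset.coe_range, Set.mem_Iio] at ha hb
          exact hinj a b (by omega) (by omega) hab)]
        rw [Finset.card_range]
        omega
      have hlt : mk k < Mk k := Finset.min'_lt_max'_of_card _ hcard
      have hi12 : i1 ≠ i2 := by
        intro h
        rw [h, hx2] at hx1
        omega
      have hmainpair : ∀ j1 j2 : ℕ, j1 < j2 → j2 ≤ k →
          phi A p (A (k-1)) k + phi A p (A k) k ≤ phi A p (A j1) k + phi A p (A j2) k := by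
        intro j1 j2 h12 h2k
        have hA1 : A (k-1) ≤ A j1 := hmono j1 (k-1) (by omega)
        have hA2 : A k ≤ A j2 := hmono j2 k (by omega)
        have hAk : A k ≤ A (k-1) := hmono (k-1) k (by omega)
        have hAk1 : A (k+1) ≤ A k := hmono k (k+1) (by omega)
        exact add_le_add
          (phi_mono hp (hA0 _) hAk1 hAk (by linarith))
          (phi_mono hp (hA0 _) hAk1 le_rfl hA2)
      rcases lt_or_gt_of_ne hi12 with h12 | h21
      · rw [hf1, hf2]
        exact hmainpair i1 i2 h12 (by omega)
      · rw [hf1, hf2, add_comm]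
        exact hmainpair i2 i1 h21 (by omega)
  -- fiberwise regrouping, left side
  have hfiberL : ∑ k ∈ Finset.range n, phi A p (f (mk k)) k ≤
      ∑ y ∈ (Finset.range n).image (fun k => mk k - 1), |f y - f (y+1)| ^ p := by
    rw [← Finset.sum_fiberwise_of_maps_to (g := fun k => mk k - 1)
      (t := (Finset.range n).image (fun k => mk k - 1))
      (fun k hk => Finset.mem_image_of_mem _ hk)
      (fun k => phi A p (f (mk k)) k)]
    apply Finset.sum_le_sum
    intro y hy
    obtain ⟨k0, hk0, hk0y⟩ := Finset.mem_image.mp hy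
    set J := Finset.filter (fun k => mk k - 1 = y) (Finset.range n) with hJ
    have hJne : J.Nonempty := ⟨k0, Finset.mem_filter.mpr ⟨hk0, hk0y⟩⟩
    have hJfact : ∀ k ∈ J, mk k = y + 1 ∧ k < n := by
      intro k hk
      have := Finset.mem_filter.mp hk
      rw [Finset.mem_range] at *
      exact ⟨by omega, by omega⟩
    set a := J.min' hJne with hha
    set b := J.max' hJne with hhb
    have haJ := J.min'_mem hJne
    have hbJ := J.max'_mem hJne
    have hab : a ≤ b := J.min'_le _ hbJ
    have hau : A a ≤ f (y+1) := by
      rw [← (hJfact a haJ).1]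
      exact hvalT a (mk a) (Finset.min'_mem _ _)
    have hbo : f y ≤ A (b+1) := by
      apply houtT
      intro hyT
      have h1 : mk b ≤ y := Finset.min'_le (T (b+1)) y hyT
      have h2 := (hJfact b hbJ).1
      omega
    have hABa : ∀ j, a ≤ j → A j ≤ f (y+1) := fun j hj =>
      le_trans (hmono a j hj) hau
    have htel := sum_tele hJne (F := fun j => (f (y+1) - A j) ^ p) (by
      intro i j hi hij hj
      apply Real.rpow_le_rpow
      · have := hABa i hi; linarith
      · have := hmono i j hij; linarith
      · linarith)
    have hψ : ∀ k ∈ J, phi A p (f (mk k)) k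
        = (f (y+1) - A (k+1)) ^ p - (f (y+1) - A k) ^ p := by
      intro k hk
      rw [(hJfact k hk).1]
      rfl
    calc ∑ k ∈ J, phi A p (f (mk k)) k
        = ∑ k ∈ J, ((f (y+1) - A (k+1)) ^ p - (f (y+1) - A k) ^ p) :=
          Finset.sum_congr rfl hψ
      _ ≤ (f (y+1) - A (b+1)) ^ p - (f (y+1) - A a) ^ p := htel
      _ ≤ (f (y+1) - A (b+1)) ^ p := by
          have : 0 ≤ (f (y+1) - A a) ^ p := Real.rpow_nonneg (by have := hau; linarith) p
          linarith
      _ ≤ (f (y+1) - f y) ^ p := by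
          apply Real.rpow_le_rpow
          · have := hABa (b+1) (by omega); linarith
          · linarith
          · linarith
      _ ≤ |f y - f (y+1)| ^ p := by
          apply Real.rpow_le_rpow
          · have h1 : A (b+1) ≤ f (y+1) := hABa (b+1) (by omega)
            linarith
          · rw [abs_sub_comm]; exact le_abs_self _
          · linarith
  -- fiberwise regrouping, right side
  have hfiberR : ∑ k ∈ Finset.range n, phi A p (f (Mk k)) k ≤
      ∑ y ∈ (Finset.range n).image (fun k => Mk k), |f y - f (y+1)| ^ p := by
    rw [← Finset.sum_fiberwise_of_maps_to (g := fun k => Mk k)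
      (t := (Finset.range n).image (fun k => Mk k))
      (fun k hk => Finset.mem_image_of_mem _ hk)
      (fun k => phi A p (f (Mk k)) k)]
    apply Finset.sum_le_sum
    intro y hy
    obtain ⟨k0, hk0, hk0y⟩ := Finset.mem_image.mp hy
    set J := Finset.filter (fun k => Mk k = y) (Finset.range n) with hJ
    have hJne : J.Nonempty := ⟨k0, Finset.mem_filter.mpr ⟨hk0, hk0y⟩⟩
    have hJfact : ∀ k ∈ J, Mk k = y ∧ k < n := by
      intro k hk
      have := Finset.mem_filter.mp hk
      rw [Finset.mem_range] at *
      exact ⟨this.2, by omega⟩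
    set a := J.min' hJne with hha
    set b := J.max' hJne with hhb
    have haJ := J.min'_mem hJne
    have hbJ := J.max'_mem hJne
    have hab : a ≤ b := J.min'_le _ hbJ
    have hau : A a ≤ f y := by
      rw [← (hJfact a haJ).1]
      exact hvalT a (Mk a) (Finset.max'_mem _ _)
    have hbo : f (y+1) ≤ A (b+1) := by
      apply houtT
      intro hyT
      have h1 : y + 1 ≤ Mk b := Finset.le_max' (T (b+1)) (y+1) hyT
      have h2 := (hJfact b hbJ).1
      omega
    have hABa : ∀ j, a ≤ j → A j ≤ f y := fun j hj =>
      le_trans (hmono a j hj) hau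
    have htel := sum_tele hJne (F := fun j => (f y - A j) ^ p) (by
      intro i j hi hij hj
      apply Real.rpow_le_rpow
      · have := hABa i hi; linarith
      · have := hmono i j hij; linarith
      · linarith)
    have hψ : ∀ k ∈ J, phi A p (f (Mk k)) k
        = (f y - A (k+1)) ^ p - (f y - A k) ^ p := by
      intro k hk
      rw [(hJfact k hk).1]
      rfl
    calc ∑ k ∈ J, phi A p (f (Mk k)) k
        = ∑ k ∈ J, ((f y - A (k+1)) ^ p - (f y - A k) ^ p) :=
          Finset.sum_congr rfl hψ
      _ ≤ (f y - A (b+1)) ^ p - (f y - A a) ^ p := htel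
      _ ≤ (f y - A (b+1)) ^ p := by
          have : 0 ≤ (f y - A a) ^ p := Real.rpow_nonneg (by have := hau; linarith) p
          linarith
      _ ≤ (f y - f (y+1)) ^ p := by
          apply Real.rpow_le_rpow
          · have := hABa (b+1) (by omega); linarith
          · linarith
          · linarith
      _ ≤ |f y - f (y+1)| ^ p := by
          apply Real.rpow_le_rpow
          · have h1 : A (b+1) ≤ f y := hABa (b+1) (by omega)
            linarith
          · exact le_abs_self _
          · linarith
  -- the two families of edges are disjoint
  have hdisj : Disjoint ((Finset.range n).image (fun k => mk k - 1))
      ((Finset.range n).image (fun k => Mk k)) := by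
    rw [Finset.disjoint_left]
    rintro y hyL hyR
    obtain ⟨k, hk, hky⟩ := Finset.mem_image.mp hyL
    obtain ⟨k', hk', hky'⟩ := Finset.mem_image.mp hyR
    rw [Finset.mem_range] at hk hk'
    have h1 : y + 1 ∈ T (k+1) := by
      have : mk k = y + 1 := by omega
      rw [← this]
      exact Finset.min'_mem _ _
    have h2 : y ∈ T (k'+1) := by
      rw [← hky']
      exact Finset.max'_mem _ _
    rcases le_or_gt k k' with hkk | hkk
    · have h3 : y + 1 ≤ Mk k' := Finset.le_max' (T (k'+1)) (y+1) (hTsub (k+1) (k'+1) (by omega) h1)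
      omega
    · have h3 : mk k ≤ y := Finset.min'_le (T (k+1)) y (hTsub (k'+1) (k+1) (by omega) h2)
      omega
  -- summability of the edge terms for f
  set xs : Finset ℤ := (Finset.range n).image x with hxs
  set Sbig : Finset ↥pathGraph.edgeSet :=
    (xs ∪ xs.image (fun z => z - 1)).image (fun y => ⟨s(y,y+1), edge_mem y⟩) with hSbig
  have hsummable : Summable (eterm f p) := by
    apply summable_of_ne_finset_zero (s := Sbig)
    rintro ⟨e, he⟩ hnot
    obtain ⟨y, rfl⟩ := edge_form he
    by_contra hne
    have hfy : f y ≠ 0 ∨ f (y+1) ≠ 0 := by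
      by_contra hc
      push_neg at hc
      apply hne
      rw [eterm_mk, hc.1, hc.2]
      simp [Real.zero_rpow hpne]
    have hymem : y ∈ xs ∪ xs.image (fun z => z - 1) := by
      rcases hfy with h | h
      · have : ∃ i, i < n ∧ x i = y := by
          by_contra hc
          push_neg at hc
          exact h (hout y (fun i hi => hc i hi))
        obtain ⟨i, hi, rfl⟩ := this
        exact Finset.mem_union_left _ (Finset.mem_image.mpr ⟨i, Finset.mem_range.mpr hi, rfl⟩)
      · have : ∃ i, i < n ∧ x i = y + 1 := by
          by_contra hc
          push_neg at hc
          exact h (hout (y+1) (fun i hi => hc i hi))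
        obtain ⟨i, hi, hxi⟩ := this
        apply Finset.mem_union_right
        apply Finset.mem_image.mpr
        exact ⟨y + 1, Finset.mem_image.mpr ⟨i, Finset.mem_range.mpr hi, hxi⟩, by ring⟩
    exact hnot (Finset.mem_image.mpr ⟨y, hymem, rfl⟩)
  -- put it together
  calc ∑ k ∈ Finset.range n, tgt A p k
      ≤ ∑ k ∈ Finset.range n, (phi A p (f (mk k)) k + phi A p (f (Mk k)) k) :=
        Finset.sum_le_sum (fun k hk => hlevel k (Finset.mem_range.mp hk))
    _ = ∑ k ∈ Finset.range n, phi A p (f (mk k)) k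
        + ∑ k ∈ Finset.range n, phi A p (f (Mk k)) k := Finset.sum_add_distrib
    _ ≤ ∑ y ∈ (Finset.range n).image (fun k => mk k - 1), |f y - f (y+1)| ^ p
        + ∑ y ∈ (Finset.range n).image (fun k => Mk k), |f y - f (y+1)| ^ p :=
        add_le_add hfiberL hfiberR
    _ = ∑ y ∈ ((Finset.range n).image (fun k => mk k - 1)
          ∪ (Finset.range n).image (fun k => Mk k)), |f y - f (y+1)| ^ p :=
        (Finset.sum_union hdisj).symm
    _ = ∑ e ∈ (((Finset.range n).image (fun k => mk k - 1)
          ∪ (Finset.range n).image (fun k => Mk k)).image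
            (fun y => (⟨s(y,y+1), edge_mem y⟩ : ↥pathGraph.edgeSet))), eterm f p e := by
        rw [Finset.sum_image (by
          intro a _ b _ h
          exact edge_inj (congrArg Subtype.val h))]
        exact Finset.sum_congr rfl (fun y _ => (eterm_mk f p y (edge_mem y)).symm)
    _ ≤ ∑' e : pathGraph.edgeSet, eterm f p e :=
        Summable.sum_le_tsum _ (fun e _ => eterm_nonneg f p e) hsummable

lemma rearrange_eq {u A : ℕ → ℝ}
    (hu : ∀ i j : ℕ, i ≤ j → u j ≤ u i) (hA : ∀ i j : ℕ, i ≤ j → A j ≤ A i)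
    (hu0 : ∀ i, 0 ≤ u i) (hA0 : ∀ i, 0 ≤ A i)
    (hufin : ∀ t : ℝ, 0 < t → {i : ℕ | t ≤ u i}.Finite)
    (hAfin : ∀ t : ℝ, 0 < t → {i : ℕ | t ≤ A i}.Finite)
    (hcard : ∀ t : ℝ, 0 < t → {i : ℕ | t ≤ u i}.ncard = {i : ℕ | t ≤ A i}.ncard) :
    ∀ k, u k = A k := by
  suffices h : ∀ (v w : ℕ → ℝ), (∀ i j, i ≤ j → v j ≤ v i) → (∀ i j, i ≤ j → w j ≤ w i) →
      (∀ i, 0 ≤ w i) → (∀ t, 0 < t → {i : ℕ | t ≤ v i}.Finite) →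
      (∀ t, 0 < t → {i : ℕ | t ≤ v i}.ncard = {i : ℕ | t ≤ w i}.ncard) → ∀ k, v k ≤ w k by
    intro k
    exact le_antisymm (h u A hu hA hA0 hufin hcard k)
      (h A u hA hu hu0 hAfin (fun t ht => (hcard t ht).symm) k)
  intro v w hv hw hw0 hvfin hc k
  by_contra hlt
  push_neg at hlt
  set t := v k with hht
  have ht : 0 < t := lt_of_le_of_lt (hw0 k) hlt
  have hsub1 : Set.Iic k ⊆ {i : ℕ | t ≤ v i} := fun i hi => hv i k hi
  have hsub2 : {i : ℕ | t ≤ w i} ⊆ Set.Iio k := by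
    intro i hi
    simp only [Set.mem_setOf_eq] at hi
    by_contra hik
    rw [Set.mem_Iio, not_lt] at hik
    have := hw k i hik
    linarith
  have c1 : k + 1 ≤ {i : ℕ | t ≤ v i}.ncard := by
    have he : (Set.Iic k).ncard = k + 1 := by
      rw [← Finset.coe_Iic, Set.ncard_coe_finset, Nat.card_Iic]
    rw [← he]
    exact Set.ncard_le_ncard hsub1 (hvfin t ht)
  have c2 : {i : ℕ | t ≤ w i}.ncard ≤ k := by
    have he : (Set.Iio k).ncard = k := by
      rw [← Finset.coe_Iio, Set.ncard_coe_finset, Nat.card_Iio]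
    rw [← he]
    exact Set.ncard_le_ncard hsub2 (Set.finite_Iio k)
  rw [hc t ht] at c1
  omega

noncomputable def einf (g : ℤ → ℝ) (e : ↥pathGraph.edgeSet) : ℝ :=
  Sym2.lift ⟨fun u w => |g u - g w|,
    fun u w => by dsimp only; rw [abs_sub_comm]⟩ e.1

lemma gradLinf_eq (g : ℤ → ℝ) :
    gradLinf pathGraph g = ⨆ e : pathGraph.edgeSet, einf g e := rfl

lemma einf_mk (g : ℤ → ℝ) (y : ℤ) (h : s(y,y+1) ∈ pathGraph.edgeSet) :
    einf g ⟨s(y,y+1), h⟩ = |g y - g (y+1)| := by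
  simp [einf]

instance : Nonempty ↥pathGraph.edgeSet := ⟨⟨s(0,1), edge_mem 0⟩⟩

lemma einf_bdd {g : ℤ → ℝ} {C : ℝ} (hg : ∀ z, 0 ≤ g z ∧ g z ≤ C) :
    BddAbove (Set.range (einf g)) := by
  refine ⟨C, ?_⟩
  rintro r ⟨⟨e, he⟩, rfl⟩
  obtain ⟨y, rfl⟩ := edge_form he
  rw [einf_mk]
  have h1 := hg y
  have h2 := hg (y+1)
  rw [abs_le]
  constructor <;> linarith

lemma f_inf {f : ℤ → ℝ} {A : ℕ → ℝ} {n : ℕ} {x : ℕ → ℤ} (hn : 0 < n)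
    (hmono : ∀ i j : ℕ, i ≤ j → A j ≤ A i)
    (hzero : ∀ i, n ≤ i → A i = 0)
    (hA0 : ∀ i, 0 ≤ A i)
    (hinj : ∀ i j, i < n → j < n → x i = x j → i = j)
    (hfx : ∀ i, i < n → f (x i) = A i)
    (hout : ∀ z : ℤ, (∀ i, i < n → x i ≠ z) → f z = 0) :
    (A 0 - A 1 ≤ gradLinf pathGraph f) ∧
      ∀ k : ℕ, A k - A (k+2) ≤ gradLinf pathGraph f := by
  have hfb : ∀ z, 0 ≤ f z ∧ f z ≤ A 0 := by
    intro z
    by_cases hzs : ∀ i, i < n → x i ≠ z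
    · rw [hout z hzs]
      exact ⟨le_refl 0, hA0 0⟩
    · push_neg at hzs
      obtain ⟨i, hin, rfl⟩ := hzs
      rw [hfx i hin]
      exact ⟨hA0 i, hmono 0 i (by omega)⟩
  have hbdd := einf_bdd hfb
  have hle : ∀ y : ℤ, |f y - f (y+1)| ≤ gradLinf pathGraph f := by
    intro y
    have := le_ciSup hbdd (⟨s(y,y+1), edge_mem y⟩ : ↥pathGraph.edgeSet)
    rw [einf_mk] at this
    exact this
  have hinf0 : 0 ≤ gradLinf pathGraph f := le_trans (abs_nonneg _) (hle 0)
  set T : ℕ → Finset ℤ := fun k => (Finset.range (min k n)).image x with hT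
  have hTne : ∀ k : ℕ, (T (k+1)).Nonempty := by
    intro k
    exact ⟨x 0, Finset.mem_image.mpr ⟨0, Finset.mem_range.mpr (by omega), rfl⟩⟩
  have hmemT : ∀ k z, z ∈ T k → ∃ i, i < k ∧ i < n ∧ x i = z := by
    intro k z hz
    obtain ⟨i, hi, rfl⟩ := Finset.mem_image.mp hz
    rw [Finset.mem_range] at hi
    exact ⟨i, by omega, by omega, rfl⟩
  have hinT : ∀ (k : ℕ) (z : ℤ), k < n → (z ∉ T (k+1)) → z ∈ T (k+2) → z = x (k+1) ∧ k+1 < n := by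
    intro k z hk hz1 hz2
    obtain ⟨i, hik, hin, rfl⟩ := hmemT (k+2) z hz2
    have : ¬ i < min (k+1) n := by
      intro hlt
      exact hz1 (Finset.mem_image.mpr ⟨i, Finset.mem_range.mpr hlt, rfl⟩)
    have : i = k+1 := by omega
    subst this
    exact ⟨rfl, hin⟩
  have hvalT : ∀ k z, z ∈ T (k+1) → A k ≤ f z := by
    intro k z hz
    obtain ⟨i, hik, hin, rfl⟩ := hmemT (k+1) z hz
    rw [hfx i hin]
    exact hmono i k (by omega)
  have houtT : ∀ (j : ℕ) (z : ℤ), z ∉ T j → f z ≤ A j := by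
    intro j z hz
    by_cases hzs : ∀ i, i < n → x i ≠ z
    · rw [hout z hzs]; exact hA0 j
    · push_neg at hzs
      obtain ⟨i, hin, rfl⟩ := hzs
      have : ¬ i < min j n := by
        intro hlt
        exact hz (Finset.mem_image.mpr ⟨i, Finset.mem_range.mpr hlt, rfl⟩)
      rw [hfx i hin]
      exact hmono j i (by omega)
  constructor
  · -- A 0 - A 1
    set z := (T 1).min' (hTne 0) with hz
    have hzmem : z ∈ T 1 := Finset.min'_mem _ _
    have hv : A 0 ≤ f z := hvalT 0 z hzmem
    have hvout : f (z - 1) ≤ A 1 := by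
      apply houtT
      intro hmem
      have h1 : z ≤ z - 1 := Finset.min'_le (T 1) _ hmem
      omega
    have := hle (z - 1)
    have hzz : z - 1 + 1 = z := by ring
    rw [hzz] at this
    have habs : f z - f (z-1) ≤ |f (z-1) - f z| := by
      rw [abs_sub_comm]
      exact le_abs_self _
    linarith
  · intro k
    rcases lt_or_ge k n with hk | hk
    · set a := (T (k+1)).min' (hTne k) with hha
      set b := (T (k+1)).max' (hTne k) with hhb
      have hamem : a ∈ T (k+1) := Finset.min'_mem _ _
      have hbmem : b ∈ T (k+1) := Finset.max'_mem _ _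
      have hab : a ≤ b := Finset.min'_le _ _ hbmem
      have haout : a - 1 ∉ T (k+1) := by
        intro hmem
        have : a ≤ a - 1 := Finset.min'_le _ _ hmem
        omega
      have hbout : b + 1 ∉ T (k+1) := by
        intro hmem
        have : b + 1 ≤ b := Finset.le_max' _ _ hmem
        omega
      have hor : a - 1 ∉ T (k+2) ∨ b + 1 ∉ T (k+2) := by
        by_contra hcon
        push_neg at hcon
        obtain ⟨h1, h2⟩ := hcon
        have e1 := hinT k (a-1) hk haout h1
        have e2 := hinT k (b+1) hk hbout h2
        rw [← e1.1] at e2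
        have := e2.1
        omega
      rcases hor with hcase | hcase
      · have hvout : f (a - 1) ≤ A (k+2) := houtT _ _ hcase
        have hv : A k ≤ f a := hvalT k a hamem
        have := hle (a - 1)
        have hzz : a - 1 + 1 = a := by ring
        rw [hzz] at this
        have habs : f a - f (a-1) ≤ |f (a-1) - f a| := by
          rw [abs_sub_comm]
          exact le_abs_self _
        linarith
      · have hvout : f (b + 1) ≤ A (k+2) := houtT _ _ hcase
        have hv : A k ≤ f b := hvalT k b hbmem
        have := hle b
        have habs : f b - f (b+1) ≤ |f b - f (b+1)| := le_abs_self _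
        linarith
    · rw [hzero k hk, hzero (k+2) (by omega)]
      simpa using hinf0

end PS


/-- On the path graph on `ℤ`, the rearrangement of a finitely
supported `f : ℤ → ℝ_{≥0}` along the alternating enumeration satisfies
`‖∇f*‖_{L^p} ≤ ‖∇f‖_{L^p}` for all `1 ≤ p < ∞` and for `p = ∞`. -/
theorem line_polya_szego (f fstar : ℤ → ℝ)
    (hsupp : (Function.support f).Finite) (hpos : ∀ x, 0 ≤ f x)
    (hre : IsRearrangement altEnum f fstar) :
    (∀ p : ℝ, 1 ≤ p → gradLp pathGraph fstar p ≤ gradLp pathGraph f p) ∧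
      gradLinf pathGraph fstar ≤ gradLinf pathGraph f := by
  classical
  obtain ⟨⟨σ, hσ⟩, hmonoU⟩ := hre
  have hσv : ∀ z, fstar z = f (σ z) := fun z => by rw [hσ]; rfl
  set s : Finset ℤ := hsupp.toFinset with hs
  set n : ℕ := s.card with hn
  set r : ℤ → ℤ → Prop := fun a b => f b ≤ f a with hr
  haveI : DecidableRel r := Classical.decRel r
  haveI : IsTotal ℤ r := ⟨fun a b => le_total (f b) (f a)⟩
  haveI : IsTrans ℤ r := ⟨fun a b c hab hbc => le_trans hbc hab⟩
  haveI : IsRefl ℤ r := ⟨fun a => le_refl _⟩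
  set L : List ℤ := List.insertionSort r s.toList with hL
  have hsorted : L.Pairwise r := List.pairwise_insertionSort r s.toList
  have hperm : L.Perm s.toList := List.perm_insertionSort r s.toList
  have hnodup : L.Nodup := hperm.nodup_iff.mpr s.nodup_toList
  have hlen : L.length = n := by rw [hperm.length_eq, Finset.length_toList]
  set x : ℕ → ℤ := fun i => L.getD i 0 with hx
  set A : ℕ → ℝ := fun i => if i < n then f (x i) else 0 with hA
  have hget : ∀ (i : ℕ) (h : i < n), x i = L.get ⟨i, by rw [hlen]; exact h⟩ := by
    intro i h
    exact List.getD_eq_getElem _ _ _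
  have hinj : ∀ i j, i < n → j < n → x i = x j → i = j := by
    intro i j hi hj hij
    rw [hget i hi, hget j hj] at hij
    have := (List.nodup_iff_injective_get.mp hnodup) hij
    exact congrArg Fin.val this
  have hmem : ∀ z : ℤ, f z ≠ 0 ↔ ∃ i, i < n ∧ x i = z := by
    intro z
    have hzL : f z ≠ 0 ↔ z ∈ L := by
      rw [hperm.mem_iff, Finset.mem_toList, hs, Set.Finite.mem_toFinset]
      exact Iff.rfl
    rw [hzL, List.mem_iff_get]
    constructor
    · rintro ⟨⟨i, hi⟩, hgi⟩
      refine ⟨i, by omega, ?_⟩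
      rw [hget i (by omega)]
      exact hgi
    · rintro ⟨i, hi, hxi⟩
      exact ⟨⟨i, by omega⟩, by rw [← hget i hi]; exact hxi⟩
  have hfx : ∀ i, i < n → f (x i) = A i := by
    intro i h
    rw [hA]
    simp only [if_pos h]
  have hzero : ∀ i, n ≤ i → A i = 0 := by
    intro i h
    rw [hA]
    simp only [if_neg (by omega : ¬ i < n)]
  have hA0 : ∀ i, 0 ≤ A i := by
    intro i
    rw [hA]
    dsimp only
    split
    · exact hpos _
    · exact le_refl 0
  have hout : ∀ z : ℤ, (∀ i, i < n → x i ≠ z) → f z = 0 := by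
    intro z hz
    by_contra hne
    obtain ⟨i, hi, hxi⟩ := (hmem z).mp hne
    exact hz i hi hxi
  have hmonoA : ∀ i j : ℕ, i ≤ j → A j ≤ A i := by
    intro i j hij
    by_cases hj : j < n
    · have hi : i < n := by omega
      rw [← hfx i hi, ← hfx j hj, hget i hi, hget j hj]
      exact hsorted.rel_get_of_le (Fin.mk_le_mk.mpr hij)
    · rw [hzero j (by omega)]
      exact hA0 i
  have haltinj : Function.Injective altEnum := by
    intro a b hab
    have := congrArg PS.zidx hab
    rwa [PS.zidx_altEnum, PS.zidx_altEnum] at this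
  have hfinf : ∀ t : ℝ, 0 < t → {z : ℤ | t ≤ f z}.Finite := by
    intro t ht
    apply Set.Finite.subset hsupp
    intro z hz
    simp only [Set.mem_setOf_eq] at hz
    simp only [Function.mem_support]
    intro h0
    rw [h0] at hz
    linarith
  have hfstarset : ∀ t : ℝ, {z : ℤ | t ≤ fstar z} = σ ⁻¹' {z : ℤ | t ≤ f z} := by
    intro t
    ext z
    simp only [Set.mem_setOf_eq, Set.mem_preimage, hσv z]
  have hfstarfin : ∀ t : ℝ, 0 < t → {z : ℤ | t ≤ fstar z}.Finite := by
    intro t ht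
    rw [hfstarset t]
    exact Set.Finite.preimage σ.injective.injOn (hfinf t ht)
  have hvalE : ∀ i : ℕ, fstar (altEnum i) = A i := by
    apply PS.rearrange_eq (u := fun i => fstar (altEnum i)) hmonoU hmonoA
      (fun i => by rw [hσv]; exact hpos _) hA0
    · intro t ht
      have : {i : ℕ | t ≤ fstar (altEnum i)} = altEnum ⁻¹' {z : ℤ | t ≤ fstar z} := rfl
      rw [this]
      exact Set.Finite.preimage haltinj.injOn (hfstarfin t ht)
    · intro t ht
      apply Set.Finite.subset (Set.finite_Iio n)
      intro i hi
      simp only [Set.mem_setOf_eq] at hi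
      simp only [Set.mem_Iio]
      by_contra hc
      rw [hzero i (by omega)] at hi
      linarith
    · intro t ht
      have himg1 : altEnum '' {i : ℕ | t ≤ fstar (altEnum i)} = {z : ℤ | t ≤ fstar z} := by
        ext z
        constructor
        · rintro ⟨i, hi, rfl⟩
          exact hi
        · intro hz
          exact ⟨PS.zidx z, by simp only [Set.mem_setOf_eq, PS.altEnum_zidx]; exact hz,
            PS.altEnum_zidx z⟩
      have himg2 : σ '' {z : ℤ | t ≤ fstar z} = {z : ℤ | t ≤ f z} := by
        ext z
        constructor
        · rintro ⟨w, hw, rfl⟩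
          simp only [Set.mem_setOf_eq, hσv w] at hw
          exact hw
        · intro hz
          refine ⟨σ.symm z, ?_, Equiv.apply_symm_apply σ z⟩
          simp only [Set.mem_setOf_eq, hσv (σ.symm z), Equiv.apply_symm_apply]
          exact hz
      have himg3 : x '' {i : ℕ | t ≤ A i} = {z : ℤ | t ≤ f z} := by
        ext z
        constructor
        · rintro ⟨i, hi, rfl⟩
          simp only [Set.mem_setOf_eq] at hi ⊢
          have hilt : i < n := by
            by_contra hc
            rw [hzero i (by omega)] at hi
            linarith
          rw [hfx i hilt]
          exact hi
        · intro hz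
          simp only [Set.mem_setOf_eq] at hz
          have hne : f z ≠ 0 := by intro h0; rw [h0] at hz; linarith
          obtain ⟨i, hi, rfl⟩ := (hmem z).mp hne
          exact ⟨i, by simp only [Set.mem_setOf_eq]; rw [← hfx i hi]; exact hz, rfl⟩
      have e1 : {i : ℕ | t ≤ fstar (altEnum i)}.ncard = {z : ℤ | t ≤ fstar z}.ncard := by
        rw [← himg1, Set.ncard_image_of_injOn haltinj.injOn]
      have e2 : {z : ℤ | t ≤ fstar z}.ncard = {z : ℤ | t ≤ f z}.ncard := by
        rw [← himg2, Set.ncard_image_of_injOn σ.injective.injOn]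
      have e3 : {i : ℕ | t ≤ A i}.ncard = {z : ℤ | t ≤ f z}.ncard := by
        rw [← himg3]
        rw [Set.ncard_image_of_injOn (by
          intro a ha b hb hab
          simp only [Set.mem_setOf_eq] at ha hb
          have han : a < n := by
            by_contra hc
            rw [hzero a (by omega)] at ha
            linarith
          have hbn : b < n := by
            by_contra hc
            rw [hzero b (by omega)] at hb
            linarith
          exact hinj a b han hbn hab)]
      rw [e1, e2, e3]
  have hvalz : ∀ z : ℤ, fstar z = A (PS.zidx z) := by
    intro z
    have := hvalE (PS.zidx z)
    rwa [PS.altEnum_zidx] at this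
  rcases Nat.eq_zero_or_pos n with hn0 | hnpos
  · have hf0 : ∀ z, f z = 0 := fun z => hout z (fun i hi => absurd hi (by omega))
    have hfst : fstar = f := funext (fun z => by rw [hσv z, hf0, hf0])
    rw [hfst]
    exact ⟨fun p hp => le_refl _, le_refl _⟩
  · constructor
    · intro p hp
      rw [PS.gradLp_eq, PS.gradLp_eq]
      apply Real.rpow_le_rpow
      · exact tsum_nonneg (PS.eterm_nonneg fstar p)
      · rw [PS.fstar_sum hp hmonoA hzero hvalz]
        exact PS.f_lower hp hnpos hmonoA hzero hA0 hinj hfx hout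
      · positivity
    · obtain ⟨h01, hk2⟩ := PS.f_inf hnpos hmonoA hzero hA0 hinj hfx hout
      rw [PS.gradLinf_eq fstar]
      apply ciSup_le
      rintro ⟨e, he⟩
      obtain ⟨y, rfl⟩ := PS.edge_form he
      rw [PS.einf_mk, hvalz y, hvalz (y+1)]
      rcases le_or_gt 0 y with h | h
      · obtain ⟨h1, h2⟩ := PS.zidx_nonneg h
        rw [h2, abs_of_nonneg (sub_nonneg.mpr (hmonoA _ _ (by omega)))]
        exact hk2 (PS.zidx y)
      · rcases eq_or_lt_of_le (by omega : y ≤ -1) with rfl | h2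
        · rw [(by norm_num : (-1:ℤ)+1 = 0), PS.zidx_neg_one.1, PS.zidx_neg_one.2,
            abs_of_nonpos (sub_nonpos.mpr (hmonoA 0 1 (by omega))), neg_sub]
          exact h01
        · obtain ⟨hh1, hh2, hh3, hh4⟩ := PS.zidx_neg2 (by omega : y ≤ -2)
          have hzz : PS.zidx y = PS.zidx (y+1) + 2 := by omega
          rw [hzz, abs_of_nonpos (sub_nonpos.mpr (hmonoA _ _ (by omega))), neg_sub]
          exact hk2 (PS.zidx (y+1))
end
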